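/- For all reals ε > 0, α > 1, ℓ > 0, and a, b ∈ (0, 1) satisfying a^{1−α}·b^{α} ≤ e^{ε(α−1)}, it holds that (1 − a)^{α} · (1 − e^{−ε(1+ℓ)}·b)^{1−α} ≤ exp(e^{−ε(1+αℓ)}). -/

import Mathlib

open Real

/-- Lemma `rdp-to-conv-ratio`: for `ε > 0`, `α > 1`, `ℓ > 0`, and `a, b ∈ (0, 1)` with
`a^(1-α) b^α ≤ e^(ε(α-1))`, we have
`(1 - a)^α (1 - e^(-ε(1+ℓ)) b)^(1-α) ≤ exp(e^(-ε(1+αℓ)))`. -/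
theorem rdp_to_conv_ratio
    (ε α ℓ a b : ℝ) (hε : 0 < ε) (hα : 1 < α) (hℓ : 0 < ℓ)
    (ha : a ∈ Set.Ioo (0:ℝ) 1) (hb : b ∈ Set.Ioo (0:ℝ) 1)
    (h : a ^ (1 - α) * b ^ α ≤ Real.exp (ε * (α - 1))) :
    (1 - a) ^ α * (1 - Real.exp (-ε * (1 + ℓ)) * b) ^ (1 - α)
      ≤ Real.exp (Real.exp (-ε * (1 + α * ℓ))) := by
  obtain ⟨ha0, ha1⟩ := ha
  obtain ⟨hb0, hb1⟩ := hb
  set c : ℝ := Real.exp (-ε * (1 + ℓ)) with hc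
  set δ : ℝ := Real.exp (-ε * (1 + α * ℓ)) with hδ
  set v : ℝ := c * b with hv
  have hs : (0:ℝ) < α - 1 := by linarith
  have hc0 : 0 < c := Real.exp_pos _
  have hc1 : c < 1 := by
    have h0 : -ε * (1 + ℓ) < 0 := by nlinarith
    rw [hc]
    exact lt_of_lt_of_eq (Real.exp_lt_exp.mpr h0) Real.exp_zero
  have hδ0 : 0 < δ := Real.exp_pos _
  have hδ1 : δ < 1 := by
    have h0 : -ε * (1 + α * ℓ) < 0 := by
      have hal : 0 < α * ℓ := mul_pos (lt_trans one_pos hα) hℓ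
      nlinarith [mul_pos hε hal]
    rw [hδ]
    exact lt_of_lt_of_eq (Real.exp_lt_exp.mpr h0) Real.exp_zero
  have hv0 : 0 < v := mul_pos hc0 hb0
  have hv1 : v < 1 := by
    have : v < 1 * 1 := by
      apply mul_lt_mul' hc1.le hb1 hb0.le one_pos
    linarith
  have h1a : (0:ℝ) < 1 - a := by linarith
  have h1v : (0:ℝ) < 1 - v := by linarith
  -- transformed hypothesis
  have hyp2 : v ^ α * a ^ (1 - α) ≤ δ := by
    have hca : c ^ α = Real.exp ((-ε * (1 + ℓ)) * α) := by
      rw [Real.rpow_def_of_pos hc0, Real.log_exp]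
    calc v ^ α * a ^ (1 - α)
        = c ^ α * (a ^ (1 - α) * b ^ α) := by
          rw [hv, Real.mul_rpow hc0.le hb0.le]; ring
      _ ≤ c ^ α * Real.exp (ε * (α - 1)) := by
          apply mul_le_mul_of_nonneg_left h (Real.rpow_nonneg hc0.le α)
      _ = δ := by
          rw [hca, ← Real.exp_add, hδ]; congr 1; ring
  -- rewrite goal in exp form
  rw [Real.rpow_def_of_pos h1a, Real.rpow_def_of_pos h1v, ← Real.exp_add,
    Real.exp_le_exp]
  set L1 : ℝ := Real.log (1 - a) with hL1
  set L2 : ℝ := Real.log (1 - v) with hL2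
  by_cases hav : v ≤ a
  · -- easy case
    have l1 : L1 ≤ L2 := Real.log_le_log h1a (by linarith)
    have l2 : L2 ≤ 0 := Real.log_nonpos (by linarith) (by linarith)
    have l3 : 0 ≤ α * (L2 - L1) := mul_nonneg (by linarith) (by linarith)
    linarith [l1, l2, l3, hδ0]
  · push_neg at hav
    -- a < v
    have hyp3 : v * (v / a) ^ (α - 1) ≤ δ := by
      have e : v * (v / a) ^ (α - 1) = v ^ α * a ^ (1 - α) := by
        rw [Real.div_rpow hv0.le ha0.le,
          show (1 - α) = -(α - 1) by ring, Real.rpow_neg ha0.le,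
          show (α:ℝ) = (α - 1) + 1 by ring, Real.rpow_add_one hv0.ne',
          show ((α:ℝ) - 1 + 1 - 1) = α - 1 by ring]
        field_simp
      rw [e]; exact hyp2
    have hva1 : (1:ℝ) ≤ v / a := le_of_lt ((one_lt_div ha0).mpr hav)
    have hpow1 : (1:ℝ) ≤ (v / a) ^ (α - 1) := by
      calc (1:ℝ) = (v / a) ^ (0:ℝ) := (Real.rpow_zero _).symm
        _ ≤ (v / a) ^ (α - 1) :=
          Real.rpow_le_rpow_of_exponent_le hva1 (by linarith)
    have hvδ : v ≤ δ := by
      calc v = v * 1 := (mul_one v).symm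
        _ ≤ v * (v / a) ^ (α - 1) := by
            apply mul_le_mul_of_nonneg_left hpow1 hv0.le
        _ ≤ δ := hyp3
    set t : ℝ := (v / δ) ^ (1 / (α - 1)) with htd
    have ht0 : 0 < t := Real.rpow_pos_of_pos (div_pos hv0 hδ0) _
    have ht1 : t ≤ 1 :=
      Real.rpow_le_one (div_nonneg hv0.le hδ0.le)
        ((div_le_one hδ0).mpr hvδ) (by positivity)
    have hts : t ^ (α - 1) = v / δ := by
      rw [htd, ← Real.rpow_mul (div_nonneg hv0.le hδ0.le),
        one_div_mul_cancel hs.ne', Real.rpow_one]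
    have hvt : v = δ * t ^ (α - 1) := by
      rw [hts]; field_simp
    -- a ≥ v * t
    have hat : v * t ≤ a := by
      have h1 : (v / a) ^ (α - 1) ≤ δ / v := by
        rw [le_div_iff₀ hv0]
        calc (v / a) ^ (α - 1) * v = v * (v / a) ^ (α - 1) := by ring
          _ ≤ δ := hyp3
      have h2 : v / a ≤ (δ / v) ^ (1 / (α - 1)) := by
        have h2a := Real.rpow_le_rpow
          (Real.rpow_nonneg (div_nonneg hv0.le ha0.le) _) h1
          (le_of_lt (by positivity : (0:ℝ) < 1 / (α - 1)))
        rwa [← Real.rpow_mul (div_nonneg hv0.le ha0.le),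
          mul_one_div_cancel hs.ne', Real.rpow_one] at h2a
      have h3 : (δ / v) ^ (1 / (α - 1)) = t⁻¹ := by
        rw [htd, show δ / v = (v / δ)⁻¹ by rw [inv_div],
          Real.inv_rpow (div_nonneg hv0.le hδ0.le)]
      rw [h3, div_le_iff₀ ha0] at h2
      calc v * t ≤ t⁻¹ * a * t := mul_le_mul_of_nonneg_right h2 ht0.le
        _ = a := by field_simp
    -- core inequality: (α-1) * t^(α-1) * (1-t) ≤ 1 - t^(α-1)
    have core : (α - 1) * t ^ (α - 1) * (1 - t) ≤ 1 - t ^ (α - 1) := by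
      have e1 : t ^ (α - 1) = Real.exp (Real.log t * (α - 1)) :=
        Real.rpow_def_of_pos ht0 _
      have e2 : (α - 1) * (1 - t) + 1 ≤ Real.exp ((α - 1) * (1 - t)) :=
        Real.add_one_le_exp _
      have e4 : Real.log t * (α - 1) + (α - 1) * (1 - t) ≤ 0 := by
        have hlt : Real.log t ≤ t - 1 := Real.log_le_sub_one_of_pos ht0
        nlinarith
      have e5 : Real.exp (Real.log t * (α - 1)) * Real.exp ((α - 1) * (1 - t))
          ≤ 1 := by
        rw [← Real.exp_add]
        calc Real.exp (Real.log t * (α - 1) + (α - 1) * (1 - t))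
            ≤ Real.exp 0 := Real.exp_le_exp.mpr e4
          _ = 1 := Real.exp_zero
      have e6 : t ^ (α - 1) * ((α - 1) * (1 - t) + 1) ≤ 1 := by
        calc t ^ (α - 1) * ((α - 1) * (1 - t) + 1)
            ≤ t ^ (α - 1) * Real.exp ((α - 1) * (1 - t)) := by
              apply mul_le_mul_of_nonneg_left e2 (Real.rpow_nonneg ht0.le _)
          _ = Real.exp (Real.log t * (α - 1)) * Real.exp ((α - 1) * (1 - t)) := by
              rw [← e1]
          _ ≤ 1 := e5
      nlinarith [e6]
    -- k0 : (α-1) * (v - v*t) ≤ δ - v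
    have k0 : (α - 1) * (v - v * t) ≤ δ - v := by
      have hm := mul_le_mul_of_nonneg_left core hδ0.le
      calc (α - 1) * (v - v * t)
          = δ * ((α - 1) * t ^ (α - 1) * (1 - t)) := by rw [hvt]; ring
        _ ≤ δ * (1 - t ^ (α - 1)) := hm
        _ = δ - v := by rw [hvt]; ring
    -- key : (α-1)*(v-a) ≤ (δ + a)*(1 - v)
    have key : (α - 1) * (v - a) ≤ (δ + a) * (1 - v) := by
      have k1 : (α - 1) * (v - a) ≤ δ - v := by
        calc (α - 1) * (v - a) ≤ (α - 1) * (v - v * t) := by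
              apply mul_le_mul_of_nonneg_left (by linarith) hs.le
          _ ≤ δ - v := k0
      linarith [k1, mul_nonneg ha0.le h1v.le,
        mul_nonneg hv0.le (by linarith : (0:ℝ) ≤ 1 - δ)]
    -- log bounds
    have b1 : L1 ≤ -a := by
      have := Real.log_le_sub_one_of_pos h1a
      rw [hL1]; linarith
    have b2 : L1 - L2 ≤ (v - a) / (1 - v) := by
      have hd : (0:ℝ) < (1 - a) / (1 - v) := div_pos h1a h1v
      have := Real.log_le_sub_one_of_pos hd
      rw [hL1, hL2, ← Real.log_div h1a.ne' h1v.ne']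
      calc Real.log ((1 - a) / (1 - v)) ≤ (1 - a) / (1 - v) - 1 := this
        _ = (v - a) / (1 - v) := by field_simp; ring
    have b3 : (α - 1) * (L1 - L2) ≤ (α - 1) * ((v - a) / (1 - v)) :=
      mul_le_mul_of_nonneg_left b2 hs.le
    have b4 : (α - 1) * ((v - a) / (1 - v)) ≤ δ + a := by
      rw [show (α - 1) * ((v - a) / (1 - v)) = ((α - 1) * (v - a)) / (1 - v) by ring,
        div_le_iff₀ h1v]
      exact key
    have final : L1 * α + L2 * (1 - α) = L1 + (α - 1) * (L1 - L2) := by ring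
    linarith [b1, b3, b4]
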